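/- Let n ≥ 1 be an integer, h > 0, and T₁, …, T_n nonnegative real numbers; define Q := Σ_{j=1}^{n} (j/n)·T_j^{n/j}·(2(n−j))^{(n−j)/j}, with the convention 0⁰ = 1 (so the j = n summand equals T_n). Let a₁, …, a_n : ℂ → ℂ satisfy |a_j(z)| ≤ T_j·e^{−j·h·Re z} for every z ∈ ℂ with Re z < 0 and every j ∈ {1,…,n}, and define D : ℂ → ℂ by D(z) := z^n − Σ_{j=1}^{n} z^{n−j}·a_j(z). Then for every z ∈ ℂ with Re z < 0: |D(z)| ≥ |z|^n/2 − Q·e^{−n·h·Re z}. -/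

import Mathlib

open Real

lemma key_term (n j : ℕ) (h1j : 1 ≤ j) (hjn : j ≤ n) (x : ℝ) (hx : 0 ≤ x)
    (t : ℝ) (ht : 0 ≤ t) (c : ℝ) :
    x ^ (n - j) * (t * Real.exp ((j : ℝ) * c)) ≤
      x ^ n / (2 * (n : ℝ)) +
      ((j : ℝ) / (n : ℝ)) * t ^ ((n : ℝ) / (j : ℝ)) *
        (2 * ((n : ℝ) - (j : ℝ))) ^ (((n : ℝ) - (j : ℝ)) / (j : ℝ)) *
        Real.exp ((n : ℝ) * c) := by
  have hn : 1 ≤ n := le_trans h1j hjn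
  have hN : (0:ℝ) < n := by exact_mod_cast Nat.pos_of_ne_zero (by omega)
  have hJ : (0:ℝ) < j := by exact_mod_cast h1j
  rcases eq_or_lt_of_le hjn with heq | hlt
  · -- j = n
    subst heq
    simp only [Nat.sub_self, pow_zero, one_mul, sub_self]
    rw [mul_zero, zero_div, Real.rpow_zero, div_self hJ.ne', Real.rpow_one]
    have h0 : 0 ≤ x ^ j / (2 * (j:ℝ)) := div_nonneg (pow_nonneg hx j) (by positivity)
    nlinarith [Real.exp_pos ((j:ℝ)*c)]
  · -- j < n
    have hNJ : (0:ℝ) < (n:ℝ) - j := by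
      have : (j:ℝ) < n := by exact_mod_cast hlt
      linarith
    set p : ℝ := (n:ℝ) / ((n:ℝ) - j) with hp
    set q : ℝ := (n:ℝ) / (j:ℝ) with hq
    have hpq : p.HolderConjugate q := by
      constructor
      · rw [hp, hq, inv_one, inv_div, inv_div, ← add_div, sub_add_cancel, div_self hN.ne']
      · rw [hp]; exact div_pos hN hNJ
      · rw [hq]; exact div_pos hN hJ
    set lam : ℝ := (2 * ((n:ℝ) - j)) ^ (((n:ℝ) - j) / (n:ℝ)) with hlam
    have h2NJ : (0:ℝ) < 2 * ((n:ℝ) - j) := by linarith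
    have hlam_pos : 0 < lam := Real.rpow_pos_of_pos h2NJ _
    have he : (0:ℝ) < Real.exp ((j:ℝ)*c) := Real.exp_pos _
    have key := Real.young_inequality_of_nonneg
      (a := x ^ (n - j) / lam) (b := lam * (t * Real.exp ((j:ℝ)*c)))
      (div_nonneg (pow_nonneg hx _) hlam_pos.le)
      (mul_nonneg hlam_pos.le (mul_nonneg ht he.le)) hpq
    have hab : x ^ (n - j) / lam * (lam * (t * Real.exp ((j:ℝ)*c)))
        = x ^ (n - j) * (t * Real.exp ((j:ℝ)*c)) := by
      field_simp
    rw [hab] at key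
    refine key.trans (le_of_eq ?_)
    have hcast : ((n - j : ℕ) : ℝ) = (n:ℝ) - j := Nat.cast_sub hjn
    -- a^p/p = x^n/(2n)
    have ha : (x ^ (n - j) / lam) ^ p / p = x ^ n / (2 * (n:ℝ)) := by
      rw [Real.div_rpow (pow_nonneg hx _) hlam_pos.le]
      have h1 : (x ^ (n - j)) ^ p = x ^ n := by
        rw [← Real.rpow_natCast x (n - j), ← Real.rpow_mul hx, hcast, hp]
        have hex : ((n:ℝ) - j) * ((n:ℝ) / ((n:ℝ) - j)) = (n:ℝ) := by
          field_simp
        rw [hex]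
        exact Real.rpow_natCast x n
      have h2 : lam ^ p = 2 * ((n:ℝ) - j) := by
        rw [hlam, ← Real.rpow_mul h2NJ.le, hp, div_mul_div_comm,
          mul_comm ((n:ℝ) - j) (n:ℝ), div_self (by positivity), Real.rpow_one]
      rw [h1, h2, hp]
      rw [div_div_eq_mul_div]
      field_simp
    -- b^q/q = (j/n) * t^(n/j) * (2(n-j))^((n-j)/j) * exp(n c)
    have hb : (lam * (t * Real.exp ((j:ℝ)*c))) ^ q / q
        = (j:ℝ) / (n:ℝ) * t ^ ((n:ℝ)/(j:ℝ)) * (2*((n:ℝ)-j)) ^ (((n:ℝ)-j)/(j:ℝ))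
          * Real.exp ((n:ℝ)*c) := by
      rw [Real.mul_rpow hlam_pos.le (mul_nonneg ht he.le),
        Real.mul_rpow ht he.le]
      have h1 : lam ^ q = (2*((n:ℝ)-j)) ^ (((n:ℝ)-j)/(j:ℝ)) := by
        rw [hlam, ← Real.rpow_mul h2NJ.le, hq]
        congr 1
        field_simp
      have h2 : Real.exp ((j:ℝ)*c) ^ q = Real.exp ((n:ℝ)*c) := by
        rw [← Real.exp_mul, hq]
        congr 1
        field_simp
      rw [h1, h2, hq]
      rw [div_div_eq_mul_div]
      field_simp
    rw [ha, hb]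

/-- The lower bound on the characteristic function established in the proof of
Corollary 4.8 of the paper: `|D(z)| ≥ |z|^n/2 − Q e^{−nh Re z}` for `Re z < 0`. -/
theorem characteristic_lower_bound (n : ℕ) (hn : 1 ≤ n) (h : ℝ) (hh : 0 < h)
    (T : ℕ → ℝ) (hT : ∀ j, 0 ≤ T j)
    (Q : ℝ)
    (hQ : Q = ∑ j ∈ Finset.Icc 1 n, ((j : ℝ) / (n : ℝ)) *
      (T j) ^ ((n : ℝ) / (j : ℝ)) *
      (2 * ((n : ℝ) - (j : ℝ))) ^ (((n : ℝ) - (j : ℝ)) / (j : ℝ)))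
    (a : ℕ → ℂ → ℂ)
    (ha : ∀ j ∈ Finset.Icc 1 n, ∀ z : ℂ, z.re < 0 →
      ‖a j z‖ ≤ T j * Real.exp (-(j : ℝ) * h * z.re))
    (D : ℂ → ℂ)
    (hD : ∀ z : ℂ, D z = z ^ n - ∑ j ∈ Finset.Icc 1 n, z ^ (n - j) * a j z) :
    ∀ z : ℂ, z.re < 0 →
      ‖z‖ ^ n / 2 - Q * Real.exp (-(n : ℝ) * h * z.re) ≤
        ‖D z‖ := by
  intro z hz
  set x := ‖z‖ with hx
  have hx0 : 0 ≤ x := norm_nonneg z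
  set c : ℝ := -h * z.re with hc
  set S := ∑ j ∈ Finset.Icc 1 n, z ^ (n - j) * a j z with hS
  -- triangle inequality
  have h1 : x ^ n - ‖S‖ ≤ ‖D z‖ := by
    rw [hD z]
    calc x ^ n - ‖S‖ = ‖z ^ n‖ - ‖S‖ := by
          simp [hx, norm_pow]
      _ ≤ ‖z ^ n - S‖ := norm_sub_norm_le _ _
      _ = ‖z ^ n - S‖ := rfl
  -- bound the sum
  have h2 : ‖S‖ ≤
      ∑ j ∈ Finset.Icc 1 n, x ^ (n - j) * (T j * Real.exp ((j : ℝ) * c)) := by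
    refine (norm_sum_le _ _).trans (Finset.sum_le_sum ?_)
    intro j hj
    rw [norm_mul, norm_pow]
    refine mul_le_mul_of_nonneg_left ?_ (pow_nonneg hx0 _)
    have := ha j hj z hz
    have hce : -(j : ℝ) * h * z.re = (j : ℝ) * c := by rw [hc]; ring
    rwa [hce] at this
  -- per-term Young bound
  have h3 : ∑ j ∈ Finset.Icc 1 n, x ^ (n - j) * (T j * Real.exp ((j : ℝ) * c)) ≤
      x ^ n / 2 + Q * Real.exp ((n : ℝ) * c) := by
    calc ∑ j ∈ Finset.Icc 1 n, x ^ (n - j) * (T j * Real.exp ((j : ℝ) * c))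
        ≤ ∑ j ∈ Finset.Icc 1 n, (x ^ n / (2 * (n : ℝ)) +
            ((j : ℝ) / (n : ℝ)) * (T j) ^ ((n : ℝ) / (j : ℝ)) *
            (2 * ((n : ℝ) - (j : ℝ))) ^ (((n : ℝ) - (j : ℝ)) / (j : ℝ)) *
            Real.exp ((n : ℝ) * c)) := by
          refine Finset.sum_le_sum fun j hj => ?_
          have hj' := Finset.mem_Icc.mp hj
          exact key_term n j hj'.1 hj'.2 x hx0 (T j) (hT j) c
      _ = x ^ n / 2 + Q * Real.exp ((n : ℝ) * c) := by
          rw [Finset.sum_add_distrib, Finset.sum_const, Nat.card_Icc]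
          rw [hQ, ← Finset.sum_mul]
          congr 1
          have hn0 : (0:ℝ) < (n:ℝ) := by exact_mod_cast hn
          rw [show n + 1 - 1 = n from rfl]
          rw [nsmul_eq_mul]
          field_simp
  have hce2 : -(n : ℝ) * h * z.re = (n : ℝ) * c := by rw [hc]; ring
  rw [hce2]
  linarith
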